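/- The theta function satisfies the heat equation: for every τ ∈ H_g, z ∈ ℂ^g and indices 1 ≤ j,k ≤ g, the second partial derivative ∂²θ/∂z_j∂z_k(τ,z) (differentiating in the j-th and k-th coordinates of z) equals 2πi times the derivative at s = 0 of the one-complex-variable map s ↦ θ(τ + s(E_{jk} + E_{kj}), z), where E_{jk} is the elementary g×g matrix with 1 in position (j,k) and 0 elsewhere. (In classical symmetric coordinates τ_{jk} = τ_{kj} this reads ∂²θ/∂z_j∂z_k = 2πi(1+δ_{jk}) ∂θ/∂τ_{jk}, with δ the Kronecker symbol.) -/

import Mathlib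

open scoped Matrix
open Matrix

/-- The Riemann theta function `θ(τ,z) = ∑_{n ∈ ℤ^g} exp(πi(nᵀτn + 2nᵀz))`. -/
noncomputable def riemannTheta (g : ℕ) (τ : Matrix (Fin g) (Fin g) ℂ) (z : Fin g → ℂ) : ℂ :=
  ∑' n : Fin g → ℤ,
    Complex.exp ((Real.pi : ℂ) * Complex.I *
      ((fun i => (n i : ℂ)) ⬝ᵥ τ.mulVec (fun i => (n i : ℂ)) +
        2 * ((fun i => (n i : ℂ)) ⬝ᵥ z)))

section ThetaAux

private lemma summable_exp_int (δ : ℝ) (hδ : 0 < δ) :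
    Summable fun m : ℤ => Real.exp (-δ * |(m : ℝ)|) := by
  have hgeo : Summable fun n : ℕ => Real.exp (-δ * n) := by
    have : ∀ n : ℕ, Real.exp (-δ * n) = (Real.exp (-δ)) ^ n := by
      intro n; rw [← Real.exp_nat_mul]; ring_nf
    simp_rw [this]
    exact summable_geometric_of_lt_one (Real.exp_nonneg _)
      (Real.exp_lt_one_iff.mpr (by linarith))
  apply Summable.of_nat_of_neg
  · simpa using hgeo
  · simpa using hgeo

private lemma summable_prod_exp (g : ℕ) (δ : ℝ) (hδ : 0 < δ) :
    Summable fun n : Fin g → ℤ => ∏ i, Real.exp (-δ * |(n i : ℝ)|) := by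
  induction g with
  | zero => exact Summable.of_finite
  | succ g ih =>
    have := ((summable_exp_int δ hδ).mul_of_nonneg ih
      (fun m => Real.exp_nonneg _)
      (fun n => Finset.prod_nonneg fun i _ => Real.exp_nonneg _))
    apply ((Fin.consEquiv (fun _ : Fin (g+1) => ℤ)).summable_iff).mp
    refine this.congr fun p => ?_
    simp [Function.comp, Fin.prod_univ_succ, Fin.consEquiv]

private lemma poly_exp_bound {a : ℝ} (ha : 0 < a) (γ A B t : ℝ) (hA : 0 ≤ A) (hB : 0 ≤ B)
    : (A + B * t ^ 2) * Real.exp (-a * t ^ 2 + γ * t) ≤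
      (A + 2 * B / a) * Real.exp (γ ^ 2 / (2 * a)) := by
  have h1 : -a * t ^ 2 + γ * t ≤ -(a / 2) * t ^ 2 + γ ^ 2 / (2 * a) := by
    rw [← sub_nonneg]
    have heq : -(a / 2) * t ^ 2 + γ ^ 2 / (2 * a) - (-a * t ^ 2 + γ * t) =
        (a * t - γ) ^ 2 / (2 * a) := by field_simp; ring
    rw [heq]; positivity
  have h2 : Real.exp (-a * t ^ 2 + γ * t) ≤
      Real.exp (-(a / 2) * t ^ 2) * Real.exp (γ ^ 2 / (2 * a)) := by
    rw [← Real.exp_add]; exact Real.exp_le_exp.mpr h1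
  have h3 : (A + B * t ^ 2) * Real.exp (-(a / 2) * t ^ 2) ≤ A + 2 * B / a := by
    have hx : a / 2 * t ^ 2 ≤ Real.exp (a / 2 * t ^ 2) := by
      linarith [Real.add_one_le_exp (a / 2 * t ^ 2)]
    have hexple : Real.exp (-(a / 2) * t ^ 2) ≤ 1 := by
      rw [Real.exp_le_one_iff]; nlinarith [sq_nonneg t]
    have hpos : (0:ℝ) < Real.exp (-(a / 2) * t ^ 2) := Real.exp_pos _
    have hprod : Real.exp (-(a / 2) * t ^ 2) * Real.exp (a / 2 * t ^ 2) = 1 := by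
      rw [← Real.exp_add]; ring_nf; exact Real.exp_zero
    have ht2 : t ^ 2 * Real.exp (-(a / 2) * t ^ 2) ≤ 2 / a := by
      rw [le_div_iff₀ ha]
      nlinarith [sq_nonneg t]
    have hBb := mul_le_mul_of_nonneg_left ht2 hB
    have hAb := mul_le_mul_of_nonneg_left hexple hA
    have : B * (2 / a) = 2 * B / a := by ring
    nlinarith
  calc (A + B * t ^ 2) * Real.exp (-a * t ^ 2 + γ * t)
      ≤ (A + B * t ^ 2) * (Real.exp (-(a / 2) * t ^ 2) * Real.exp (γ ^ 2 / (2 * a))) := by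
        apply mul_le_mul_of_nonneg_left h2 (by positivity)
    _ = ((A + B * t ^ 2) * Real.exp (-(a / 2) * t ^ 2)) * Real.exp (γ ^ 2 / (2 * a)) := by ring
    _ ≤ (A + 2 * B / a) * Real.exp (γ ^ 2 / (2 * a)) :=
        mul_le_mul_of_nonneg_right h3 (Real.exp_nonneg _)

private lemma summable_master (g : ℕ) {a : ℝ} (ha : 0 < a) (b A B : ℝ)
    (hA : 0 ≤ A) (hB : 0 ≤ B) :
    Summable fun n : Fin g → ℤ =>
      (A + B * ‖(fun i => (n i : ℝ))‖ ^ 2) *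
        Real.exp (-a * ‖(fun i => (n i : ℝ))‖ ^ 2 + b * ‖(fun i => (n i : ℝ))‖) := by
  set δ := a / (2 * (g + 1)) with hδdef
  have hδ : 0 < δ := by positivity
  set K := (A + 2 * B / a) * Real.exp ((b + a / 2) ^ 2 / (2 * a)) with hK
  refine Summable.of_nonneg_of_le ?_ ?_ ((summable_prod_exp g δ hδ).mul_left K)
  · intro n; positivity
  · intro n
    set N := ‖(fun i => (n i : ℝ))‖ with hN
    have hN0 : 0 ≤ N := norm_nonneg _
    have hr : ∑ i, |(n i : ℝ)| ≤ g * N := by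
      calc ∑ i : Fin g, |(n i : ℝ)| ≤ ∑ _i : Fin g, N := by
            apply Finset.sum_le_sum
            intro i _
            simpa using norm_le_pi_norm (fun i => (n i : ℝ)) i
        _ = g * N := by simp [mul_comm]
    have hprod : ∏ i, Real.exp (-δ * |(n i : ℝ)|) = Real.exp (-δ * ∑ i, |(n i : ℝ)|) := by
      rw [← Real.exp_sum]; congr 1; rw [Finset.mul_sum]
    rw [hprod]
    have hstep : -δ * ∑ i, |(n i : ℝ)| ≥ -(a / 2) * N := by
      have h1 : δ * ∑ i, |(n i : ℝ)| ≤ δ * (g * N) := by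
        apply mul_le_mul_of_nonneg_left hr hδ.le
      have h2 : δ * (g * N) ≤ a / 2 * N := by
        rw [hδdef]
        rw [div_mul_eq_mul_div, div_le_iff₀ (by positivity)]
        have : (g : ℝ) ≤ g + 1 := by linarith
        nlinarith
      nlinarith
    have hKb : (A + B * N ^ 2) * Real.exp (-a * N ^ 2 + b * N) ≤
        K * Real.exp (-(a / 2) * N) := by
      have := poly_exp_bound ha (b + a / 2) A B N hA hB
      have hsplit : Real.exp (-a * N ^ 2 + b * N) =
          Real.exp (-a * N ^ 2 + (b + a / 2) * N) * Real.exp (-(a / 2) * N) := by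
        rw [← Real.exp_add]; ring_nf
      rw [hsplit, ← mul_assoc]
      apply mul_le_mul_of_nonneg_right _ (Real.exp_nonneg _)
      calc (A + B * N ^ 2) * Real.exp (-a * N ^ 2 + (b + a / 2) * N) ≤
          (A + 2 * B / a) * Real.exp ((b + a / 2) ^ 2 / (2 * a)) := this
        _ = K := rfl
    calc (A + B * N ^ 2) * Real.exp (-a * N ^ 2 + b * N)
        ≤ K * Real.exp (-(a / 2) * N) := hKb
      _ ≤ K * Real.exp (-δ * ∑ i, |(n i : ℝ)|) := by
          apply mul_le_mul_of_nonneg_left (Real.exp_le_exp.mpr (by linarith)) (by positivity)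

private lemma posdef_quadratic_lower_bound {g : ℕ} {Y : Matrix (Fin g) (Fin g) ℝ}
    (hY : Y.PosDef) : ∃ c : ℝ, 0 < c ∧ ∀ x : Fin g → ℝ, c * ‖x‖ ^ 2 ≤ x ⬝ᵥ Y *ᵥ x := by
  have hfc : Continuous fun x : Fin g → ℝ => x ⬝ᵥ Y *ᵥ x := by
    have : Continuous fun x : Fin g → ℝ => ∑ i, x i * ∑ j, Y i j * x j := by fun_prop
    exact this
  rcases Nat.eq_zero_or_pos g with hg | hg
  · subst hg
    refine ⟨1, one_pos, fun x => ?_⟩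
    have hx : x = 0 := Subsingleton.elim _ _
    subst hx
    simp only [dotProduct, Finset.univ_eq_empty, Finset.sum_empty, norm_zero]
    norm_num
  · haveI : Nonempty (Fin g) := ⟨⟨0, hg⟩⟩
    have hsne : (Metric.sphere (0 : Fin g → ℝ) 1).Nonempty :=
      NormedSpace.sphere_nonempty.mpr zero_le_one
    obtain ⟨x₀, hx₀S, hmin⟩ :=
      (isCompact_sphere (0 : Fin g → ℝ) 1).exists_isMinOn hsne hfc.continuousOn
    have hx₀norm : ‖x₀‖ = 1 := by simpa using mem_sphere_zero_iff_norm.mp hx₀S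
    have hx₀ne : x₀ ≠ 0 := by
      intro h; rw [h] at hx₀norm; simp at hx₀norm
    have hc : 0 < x₀ ⬝ᵥ Y *ᵥ x₀ := by
      have := hY.dotProduct_mulVec_pos hx₀ne
      simpa using this
    refine ⟨x₀ ⬝ᵥ Y *ᵥ x₀, hc, fun x => ?_⟩
    rcases eq_or_ne x 0 with rfl | hxne
    · simp
    · have hnx : 0 < ‖x‖ := norm_pos_iff.mpr hxne
      set y : Fin g → ℝ := ‖x‖⁻¹ • x with hy
      have hyS : y ∈ Metric.sphere (0 : Fin g → ℝ) 1 := by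
        rw [mem_sphere_zero_iff_norm, hy, norm_smul]
        simp [abs_of_pos (inv_pos.mpr hnx), inv_mul_cancel₀ hnx.ne']
      have hmy := hmin hyS
      have hquad : y ⬝ᵥ Y *ᵥ y = ‖x‖⁻¹ ^ 2 * (x ⬝ᵥ Y *ᵥ x) := by
        rw [hy, smul_dotProduct, mulVec_smul, dotProduct_smul]
        simp [smul_eq_mul]; ring
      have hle : x₀ ⬝ᵥ Y *ᵥ x₀ ≤ ‖x‖⁻¹ ^ 2 * (x ⬝ᵥ Y *ᵥ x) := by
        rw [← hquad]; exact hmy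
      calc (x₀ ⬝ᵥ Y *ᵥ x₀) * ‖x‖ ^ 2 ≤ (‖x‖⁻¹ ^ 2 * (x ⬝ᵥ Y *ᵥ x)) * ‖x‖ ^ 2 := by
            apply mul_le_mul_of_nonneg_right hle (by positivity)
        _ = x ⬝ᵥ Y *ᵥ x := by field_simp

private lemma re_pi_I (w : ℂ) : ((Real.pi : ℂ) * Complex.I * w).re = -(Real.pi * w.im) := by
  simp [Complex.mul_re, Complex.mul_im]

private lemma norm_cexp (w : ℂ) : ‖Complex.exp w‖ = Real.exp w.re := by
  rw [Complex.norm_exp]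

private lemma im_quad {g : ℕ} (τ : Matrix (Fin g) (Fin g) ℂ) (n : Fin g → ℤ) :
    ((fun i => (n i : ℂ)) ⬝ᵥ τ *ᵥ (fun i => (n i : ℂ))).im =
      (fun i => (n i : ℝ)) ⬝ᵥ (Matrix.of fun i j => (τ i j).im) *ᵥ (fun i => (n i : ℝ)) := by
  simp only [dotProduct, Matrix.mulVec, Complex.im_sum, Finset.mul_sum]
  apply Finset.sum_congr rfl
  intro i _
  apply Finset.sum_congr rfl
  intro l _
  simp [Complex.mul_im, Complex.mul_re]

private lemma im_dot {g : ℕ} (z : Fin g → ℂ) (n : Fin g → ℤ) :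
    ((fun i => (n i : ℂ)) ⬝ᵥ z).im = ∑ i, (n i : ℝ) * (z i).im := by
  simp only [dotProduct, Complex.im_sum]
  apply Finset.sum_congr rfl
  intro i _
  simp [Complex.mul_im]

private noncomputable def cA {g : ℕ} (τ : Matrix (Fin g) (Fin g) ℂ) (z : Fin g → ℂ)
    (n : Fin g → ℤ) : ℂ :=
  (Real.pi : ℂ) * Complex.I *
    ((fun i => (n i : ℂ)) ⬝ᵥ τ.mulVec (fun i => (n i : ℂ)) +
      2 * ((fun i => (n i : ℂ)) ⬝ᵥ z))

private lemma exponent_eq_z {g : ℕ} (τ : Matrix (Fin g) (Fin g) ℂ) (z : Fin g → ℂ)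
    (j k : Fin g) (n : Fin g → ℤ) (s t : ℂ) :
    (Real.pi : ℂ) * Complex.I *
      ((fun i => (n i : ℂ)) ⬝ᵥ τ.mulVec (fun i => (n i : ℂ)) +
        2 * ((fun i => (n i : ℂ)) ⬝ᵥ (z + s • (Pi.single j 1 : Fin g → ℂ) + t • (Pi.single k 1 : Fin g → ℂ)))) =
    (cA τ z n + (2 * (Real.pi : ℂ) * Complex.I * ((n j : ℂ))) * s) +
      (2 * (Real.pi : ℂ) * Complex.I * ((n k : ℂ))) * t := by
  have h : (fun i => (n i : ℂ)) ⬝ᵥ (z + s • (Pi.single j 1 : Fin g → ℂ) + t • (Pi.single k 1 : Fin g → ℂ)) =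
      (fun i => (n i : ℂ)) ⬝ᵥ z + s * (n j : ℂ) + t * (n k : ℂ) := by
    rw [dotProduct_add, dotProduct_add, dotProduct_smul, dotProduct_smul,
      dotProduct_single, dotProduct_single]
    simp [smul_eq_mul]
  rw [h, cA]
  ring

private lemma exponent_eq_tau {g : ℕ} (τ : Matrix (Fin g) (Fin g) ℂ) (z : Fin g → ℂ)
    (j k : Fin g) (n : Fin g → ℤ) (s : ℂ) :
    (Real.pi : ℂ) * Complex.I *
      ((fun i => (n i : ℂ)) ⬝ᵥ (τ + s • (Matrix.single j k 1 + Matrix.single k j 1)).mulVec (fun i => (n i : ℂ)) +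
        2 * ((fun i => (n i : ℂ)) ⬝ᵥ z)) =
    cA τ z n + (2 * (Real.pi : ℂ) * Complex.I * ((n j : ℂ) * (n k : ℂ))) * s := by
  have hstd : ∀ (j' k' : Fin g), (fun i => (n i : ℂ)) ⬝ᵥ (Matrix.single j' k' (1:ℂ)).mulVec (fun i => (n i : ℂ)) = (n j' : ℂ) * (n k' : ℂ) := by
    intro j' k'
    simp [dotProduct, Matrix.mulVec, Matrix.single, ite_and, ite_mul, mul_ite,
      Finset.sum_ite_eq, Finset.sum_ite_eq']
  have h : (fun i => (n i : ℂ)) ⬝ᵥ (τ + s • (Matrix.single j k 1 + Matrix.single k j 1)).mulVec (fun i => (n i : ℂ)) =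
      (fun i => (n i : ℂ)) ⬝ᵥ τ.mulVec (fun i => (n i : ℂ)) + s * ((n j : ℂ) * (n k : ℂ)) + s * ((n k : ℂ) * (n j : ℂ)) := by
    rw [Matrix.add_mulVec, dotProduct_add, Matrix.smul_mulVec, dotProduct_smul,
      Matrix.add_mulVec, dotProduct_add, hstd, hstd]
    simp [smul_eq_mul]
    ring
  rw [h, cA]
  ring

private lemma hasDerivAt_exp_affine (A B x : ℂ) :
    HasDerivAt (fun t => Complex.exp (A + B * t)) (B * Complex.exp (A + B * x)) x := by
  have h : HasDerivAt (fun t : ℂ => A + B * t) B x := by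
    simpa using ((hasDerivAt_id x).const_mul B).const_add A
  simpa [mul_comm] using h.cexp

private lemma re_cA_le {g : ℕ} (τ : Matrix (Fin g) (Fin g) ℂ) (z : Fin g → ℂ) {c₀ : ℝ}
    (hq : ∀ x : Fin g → ℝ, c₀ * ‖x‖ ^ 2 ≤ x ⬝ᵥ (Matrix.of fun i j => (τ i j).im) *ᵥ x)
    (n : Fin g → ℤ) :
    (cA τ z n).re ≤ -(Real.pi * c₀) * ‖(fun i => (n i : ℝ))‖ ^ 2 +
      (2 * Real.pi * ∑ i, ‖z i‖) * ‖(fun i => (n i : ℝ))‖ := by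
  set N := ‖(fun i => (n i : ℝ))‖ with hN
  have hN0 : 0 ≤ N := norm_nonneg _
  rw [cA, re_pi_I]
  rw [Complex.add_im]
  have h2im : (2 * ((fun i => (n i : ℂ)) ⬝ᵥ z)).im = 2 * ((fun i => (n i : ℂ)) ⬝ᵥ z).im := by
    simp [Complex.mul_im]
  rw [h2im, im_quad, im_dot]
  have hq' : c₀ * N ^ 2 ≤ (fun i => (n i : ℝ)) ⬝ᵥ (Matrix.of fun i j => (τ i j).im) *ᵥ (fun i => (n i : ℝ)) := hq _
  have hdot : |∑ i, (n i : ℝ) * (z i).im| ≤ N * ∑ i, ‖z i‖ := by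
    calc |∑ i, (n i : ℝ) * (z i).im| ≤ ∑ i, |(n i : ℝ) * (z i).im| :=
          Finset.abs_sum_le_sum_abs _ _
      _ ≤ ∑ i, N * ‖z i‖ := by
          apply Finset.sum_le_sum
          intro i _
          rw [abs_mul]
          apply mul_le_mul
          · simpa using norm_le_pi_norm (fun i => (n i : ℝ)) i
          · exact (Complex.abs_im_le_norm _)
          · exact abs_nonneg _
          · exact hN0
      _ = N * ∑ i, ‖z i‖ := by rw [Finset.mul_sum]
  have habs := abs_le.mp hdot
  have hπ := Real.pi_pos
  nlinarith [hq', habs.1, habs.2]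

end ThetaAux

set_option maxHeartbeats 1000000 in
/-- The heat equation for the theta function: for `τ` in the Siegel upper half-space,
`z ∈ ℂ^g` and `1 ≤ j,k ≤ g`, the second partial derivative `∂²θ/∂z_j∂z_k (τ,z)` equals
`2πi` times the derivative at `s = 0` of `s ↦ θ(τ + s(E_{jk} + E_{kj}), z)`, where
`E_{jk}` is the elementary matrix. -/
theorem riemannTheta_heat_equation (g : ℕ)
    (τ : Matrix (Fin g) (Fin g) ℂ) (hsym : τ.IsSymm)
    (hpos : (Matrix.of fun i j => (τ i j).im).PosDef)
    (z : Fin g → ℂ) (j k : Fin g) :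
    deriv (fun s : ℂ => deriv (fun t : ℂ =>
        riemannTheta g τ (z + s • (Pi.single j 1 : Fin g → ℂ) + t • (Pi.single k 1 : Fin g → ℂ))) 0) 0 =
      2 * (Real.pi : ℂ) * Complex.I *
        deriv (fun s : ℂ =>
          riemannTheta g
            (τ + s • (Matrix.single j k 1 + Matrix.single k j 1)) z) 0 := by
  classical
  obtain ⟨c₀, hc₀, hq⟩ := posdef_quadratic_lower_bound hpos
  have hπ := Real.pi_pos
  set N : (Fin g → ℤ) → ℝ := fun n => ‖(fun i => (n i : ℝ))‖ with hNdef
  have hN0 : ∀ n, 0 ≤ N n := fun n => norm_nonneg _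
  set Cz : ℝ := ∑ i, ‖z i‖ with hCz
  have hCz0 : 0 ≤ Cz := Finset.sum_nonneg fun i _ => norm_nonneg _
  set C₁ : ℝ := (2 * Real.pi + 1) ^ 2 with hC₁
  have hC₁0 : 0 < C₁ := by positivity
  set U : (Fin g → ℤ) → ℝ := fun n =>
    (C₁ + C₁ * N n ^ 2) * Real.exp (-(Real.pi * c₀ / 2) * N n ^ 2 +
      (2 * Real.pi * Cz + 4 * Real.pi) * N n) with hU
  have hUsum : Summable U := by
    apply summable_master g (by positivity) _ C₁ C₁ hC₁0.le hC₁0.le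
  -- basic norm facts
  have hint : ∀ (n : Fin g → ℤ) (i : Fin g), ‖((n i : ℂ))‖ ≤ N n := by
    intro n i
    have : ((n i : ℂ)) = (((n i : ℝ)) : ℂ) := by push_cast; ring
    rw [this, Complex.norm_real, Real.norm_eq_abs]
    simpa using norm_le_pi_norm (fun i => (n i : ℝ)) i
  have hnorm2πI : ‖(2 * (Real.pi : ℂ) * Complex.I)‖ = 2 * Real.pi := by
    simp [norm_mul, Complex.norm_real, abs_of_pos hπ]
  -- the master bound
  have hbound : ∀ (n : Fin g → ℤ) (coef w : ℂ),
      ‖coef‖ ≤ C₁ + C₁ * N n ^ 2 →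
      w.re ≤ Real.pi * c₀ / 2 * N n ^ 2 + 4 * Real.pi * N n →
      ‖coef * Complex.exp (cA τ z n + w)‖ ≤ U n := by
    intro n coef w h1 h2
    rw [norm_mul, norm_cexp, Complex.add_re]
    have hre := re_cA_le τ z hq n
    have hexp : Real.exp ((cA τ z n).re + w.re) ≤
        Real.exp (-(Real.pi * c₀ / 2) * N n ^ 2 + (2 * Real.pi * Cz + 4 * Real.pi) * N n) := by
      apply Real.exp_le_exp.mpr
      have := hre
      rw [hNdef] at *
      nlinarith [hN0 n]
    calc ‖coef‖ * Real.exp ((cA τ z n).re + w.re)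
        ≤ (C₁ + C₁ * N n ^ 2) *
          Real.exp (-(Real.pi * c₀ / 2) * N n ^ 2 + (2 * Real.pi * Cz + 4 * Real.pi) * N n) := by
          apply mul_le_mul h1 hexp (Real.exp_nonneg _) (by positivity)
      _ = U n := rfl
  -- abbreviations for linear coefficients
  set Bj : (Fin g → ℤ) → ℂ := fun n => 2 * (Real.pi : ℂ) * Complex.I * ((n j : ℂ)) with hBj
  set Bk : (Fin g → ℤ) → ℂ := fun n => 2 * (Real.pi : ℂ) * Complex.I * ((n k : ℂ)) with hBk
  set Bjk : (Fin g → ℤ) → ℂ := fun n =>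
    2 * (Real.pi : ℂ) * Complex.I * ((n j : ℂ) * (n k : ℂ)) with hBjk
  have hBknorm : ∀ n, ‖Bk n‖ ≤ 2 * Real.pi * N n := by
    intro n
    rw [hBk]
    calc ‖2 * (Real.pi : ℂ) * Complex.I * ((n k : ℂ))‖
        = ‖2 * (Real.pi : ℂ) * Complex.I‖ * ‖((n k : ℂ))‖ := norm_mul _ _
      _ ≤ 2 * Real.pi * N n := by
          rw [hnorm2πI]; exact mul_le_mul_of_nonneg_left (hint n k) (by positivity)
  have hBjnorm : ∀ n, ‖Bj n‖ ≤ 2 * Real.pi * N n := by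
    intro n
    rw [hBj]
    calc ‖2 * (Real.pi : ℂ) * Complex.I * ((n j : ℂ))‖
        = ‖2 * (Real.pi : ℂ) * Complex.I‖ * ‖((n j : ℂ))‖ := norm_mul _ _
      _ ≤ 2 * Real.pi * N n := by
          rw [hnorm2πI]; exact mul_le_mul_of_nonneg_left (hint n j) (by positivity)
  have hBjknorm : ∀ n, ‖Bjk n‖ ≤ 2 * Real.pi * N n ^ 2 := by
    intro n
    rw [hBjk]
    calc ‖2 * (Real.pi : ℂ) * Complex.I * ((n j : ℂ) * (n k : ℂ))‖
        = ‖2 * (Real.pi : ℂ) * Complex.I‖ * ‖(n j : ℂ) * (n k : ℂ)‖ := norm_mul _ _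
      _ = 2 * Real.pi * (‖((n j : ℂ))‖ * ‖((n k : ℂ))‖) := by rw [hnorm2πI, norm_mul]
      _ ≤ 2 * Real.pi * (N n * N n) := by
          apply mul_le_mul_of_nonneg_left _ (by positivity)
          exact mul_le_mul (hint n j) (hint n k) (norm_nonneg _) (hN0 n)
      _ = 2 * Real.pi * N n ^ 2 := by ring
  -- coefficient size facts
  have h1C : (1:ℝ) ≤ C₁ := by rw [hC₁]; nlinarith [hπ, sq_nonneg Real.pi]
  have h2πC : 2 * Real.pi ≤ C₁ := by rw [hC₁]; nlinarith [hπ, sq_nonneg Real.pi]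
  have h4πC : 4 * Real.pi ^ 2 ≤ C₁ := by rw [hC₁]; nlinarith [hπ]
  have hcoef1 : ∀ n, (1:ℝ) ≤ C₁ + C₁ * N n ^ 2 := by
    intro n
    have h2 : 0 ≤ C₁ * N n ^ 2 := by positivity
    linarith
  have hcoefk : ∀ n, 2 * Real.pi * N n ≤ C₁ + C₁ * N n ^ 2 := by
    intro n
    have h2 : 2 * Real.pi * N n ≤ 2 * Real.pi * (1 + N n ^ 2) := by
      have := sq_nonneg (N n - 1)
      nlinarith [hπ]
    have h3 : 2 * Real.pi * (1 + N n ^ 2) ≤ C₁ * (1 + N n ^ 2) := by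
      apply mul_le_mul_of_nonneg_right h2πC (by positivity)
    nlinarith [h2, h3]
  have hcoefjk : ∀ n, ‖Bj n‖ * ‖Bk n‖ ≤ C₁ + C₁ * N n ^ 2 := by
    intro n
    have h2 := mul_le_mul (hBjnorm n) (hBknorm n) (norm_nonneg _) (by positivity)
    have h3 : 2 * Real.pi * N n * (2 * Real.pi * N n) = 4 * Real.pi ^ 2 * N n ^ 2 := by ring
    have h4 : 4 * Real.pi ^ 2 * N n ^ 2 ≤ C₁ * N n ^ 2 :=
      mul_le_mul_of_nonneg_right h4πC (sq_nonneg _)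
    nlinarith [h2, h4, hC₁0]
  have hcoefjk2 : ∀ n, 2 * Real.pi * N n ^ 2 ≤ C₁ + C₁ * N n ^ 2 := by
    intro n
    have h4 : 2 * Real.pi * N n ^ 2 ≤ C₁ * N n ^ 2 :=
      mul_le_mul_of_nonneg_right h2πC (sq_nonneg _)
    nlinarith [h4, hC₁0]
  -- ================= Step 1: inner derivative =================
  have H1 : ∀ s : ℂ, s ∈ Metric.ball (0:ℂ) 1 →
      HasDerivAt (fun t : ℂ =>
          riemannTheta g τ (z + s • (Pi.single j 1 : Fin g → ℂ) + t • (Pi.single k 1 : Fin g → ℂ)))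
        (∑' n : Fin g → ℤ, Bk n * Complex.exp ((cA τ z n + Bj n * s) + Bk n * 0)) 0 := by
    intro s hs
    have hsn : ‖s‖ ≤ 1 := le_of_lt (by simpa using hs)
    have hrw : (fun t : ℂ =>
        riemannTheta g τ (z + s • (Pi.single j 1 : Fin g → ℂ) + t • (Pi.single k 1 : Fin g → ℂ))) =
        fun t : ℂ => ∑' n : Fin g → ℤ, Complex.exp ((cA τ z n + Bj n * s) + Bk n * t) := by
      funext t
      rw [riemannTheta]
      exact tsum_congr fun n => by rw [exponent_eq_z]
    rw [hrw]
    have hbnd : ∀ (n : Fin g → ℤ), ∀ t ∈ Metric.ball (0:ℂ) 1,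
        ‖Bk n * Complex.exp ((cA τ z n + Bj n * s) + Bk n * t)‖ ≤ U n := by
      intro n t ht
      have htn : ‖t‖ ≤ 1 := le_of_lt (by simpa using ht)
      rw [add_assoc]
      apply hbound n (Bk n) (Bj n * s + Bk n * t) ((hBknorm n).trans (hcoefk n))
      have hre1 : (Bj n * s + Bk n * t).re ≤ ‖Bj n * s + Bk n * t‖ :=
        Complex.re_le_norm _
      have : ‖Bj n * s + Bk n * t‖ ≤ 2 * Real.pi * N n + 2 * Real.pi * N n := by
        calc ‖Bj n * s + Bk n * t‖ ≤ ‖Bj n * s‖ + ‖Bk n * t‖ := norm_add_le _ _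
            _ = ‖Bj n‖ * ‖s‖ + ‖Bk n‖ * ‖t‖ := by
              rw [norm_mul (Bj n) s, norm_mul (Bk n) t]
            _ ≤ 2 * Real.pi * N n + 2 * Real.pi * N n := by
              have h1 : ‖Bj n‖ * ‖s‖ ≤ 2 * Real.pi * N n := by
                calc ‖Bj n‖ * ‖s‖ ≤ 2 * Real.pi * N n * 1 :=
                      mul_le_mul (hBjnorm n) hsn (norm_nonneg _) (by positivity)
                  _ = 2 * Real.pi * N n := mul_one _
              have h2 : ‖Bk n‖ * ‖t‖ ≤ 2 * Real.pi * N n := by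
                calc ‖Bk n‖ * ‖t‖ ≤ 2 * Real.pi * N n * 1 :=
                      mul_le_mul (hBknorm n) htn (norm_nonneg _) (by positivity)
                  _ = 2 * Real.pi * N n := mul_one _
              exact add_le_add h1 h2
      have hnn : 0 ≤ Real.pi * c₀ / 2 * N n ^ 2 := by positivity
      linarith [hre1, this, hnn]
    refine hasDerivAt_tsum_of_isPreconnected hUsum Metric.isOpen_ball
      (convex_ball (0:ℂ) 1).isPreconnected
      (fun n t _ => hasDerivAt_exp_affine (cA τ z n + Bj n * s) (Bk n) t)
      hbnd (Metric.mem_ball_self one_pos) ?_ (Metric.mem_ball_self one_pos)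
    · apply Summable.of_norm_bounded hUsum
      intro n
      have := hbound n 1 (Bj n * s + Bk n * 0) (by rw [norm_one]; exact hcoef1 n) ?_
      · simpa [add_assoc] using this
      · have hre1 : (Bj n * s + Bk n * 0).re ≤ ‖Bj n * s + Bk n * 0‖ := Complex.re_le_norm _
        have : ‖Bj n * s + Bk n * 0‖ ≤ 2 * Real.pi * N n := by
          simp only [mul_zero, add_zero, norm_mul]
          calc ‖Bj n‖ * ‖s‖ ≤ 2 * Real.pi * N n * 1 :=
                mul_le_mul (hBjnorm n) hsn (norm_nonneg _) (by positivity)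
            _ = 2 * Real.pi * N n := by ring
        have hnn : 0 ≤ Real.pi * c₀ / 2 * N n ^ 2 := by positivity
        have hnn2 : 0 ≤ 2 * Real.pi * N n := by positivity
        linarith [hre1, this, hnn, hnn2]
  -- ================= Step 2: outer derivative of G =================
  set G : ℂ → ℂ := fun s => ∑' n : Fin g → ℤ, Bk n * Complex.exp (cA τ z n + Bj n * s) with hG
  have H2 : HasDerivAt G
      (∑' n : Fin g → ℤ, Bk n * (Bj n * Complex.exp (cA τ z n + Bj n * 0))) 0 := by
    rw [hG]
    have hbnd : ∀ (n : Fin g → ℤ), ∀ s ∈ Metric.ball (0:ℂ) 1,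
        ‖Bk n * (Bj n * Complex.exp (cA τ z n + Bj n * s))‖ ≤ U n := by
      intro n s hs
      have hsn : ‖s‖ ≤ 1 := le_of_lt (by simpa using hs)
      rw [← mul_assoc]
      apply hbound n (Bk n * Bj n) (Bj n * s)
      · rw [norm_mul]
        calc ‖Bk n‖ * ‖Bj n‖ = ‖Bj n‖ * ‖Bk n‖ := by ring
          _ ≤ C₁ + C₁ * N n ^ 2 := hcoefjk n
      · have hre1 : (Bj n * s).re ≤ ‖Bj n * s‖ := Complex.re_le_norm _
        have : ‖Bj n * s‖ ≤ 2 * Real.pi * N n := by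
          rw [norm_mul]
          calc ‖Bj n‖ * ‖s‖ ≤ 2 * Real.pi * N n * 1 :=
                mul_le_mul (hBjnorm n) hsn (norm_nonneg _) (by positivity)
            _ = 2 * Real.pi * N n := by ring
        have hnn : 0 ≤ Real.pi * c₀ / 2 * N n ^ 2 := by positivity
        have hnn2 : 0 ≤ 2 * Real.pi * N n := by positivity
        linarith [hre1, this, hnn, hnn2]
    refine hasDerivAt_tsum_of_isPreconnected hUsum Metric.isOpen_ball
      (convex_ball (0:ℂ) 1).isPreconnected
      (fun n s _ => HasDerivAt.const_mul (Bk n) (hasDerivAt_exp_affine (cA τ z n) (Bj n) s))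
      hbnd (Metric.mem_ball_self one_pos) ?_ (Metric.mem_ball_self one_pos)
    · apply Summable.of_norm_bounded hUsum
      intro n
      apply hbound n (Bk n) (Bj n * 0) ((hBknorm n).trans (hcoefk n))
      simp only [mul_zero, Complex.zero_re]
      positivity
  -- ================= Step 3: RHS derivative =================
  set r : ℝ := min (c₀ / 4) 1 with hr
  have hr0 : 0 < r := lt_min (by positivity) one_pos
  have H3 : HasDerivAt
      (fun s : ℂ => riemannTheta g
        (τ + s • (Matrix.single j k 1 + Matrix.single k j 1)) z)
      (∑' n : Fin g → ℤ, Bjk n * Complex.exp (cA τ z n + Bjk n * 0)) 0 := by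
    have hrw : (fun s : ℂ => riemannTheta g
        (τ + s • (Matrix.single j k 1 + Matrix.single k j 1)) z) =
        fun s : ℂ => ∑' n : Fin g → ℤ, Complex.exp (cA τ z n + Bjk n * s) := by
      funext s
      rw [riemannTheta]
      exact tsum_congr fun n => by rw [exponent_eq_tau]
    rw [hrw]
    have hbnd : ∀ (n : Fin g → ℤ), ∀ s ∈ Metric.ball (0:ℂ) r,
        ‖Bjk n * Complex.exp (cA τ z n + Bjk n * s)‖ ≤ U n := by
      intro n s hs
      have hsn : ‖s‖ ≤ c₀ / 4 := by
        have := (by simpa using hs : ‖s‖ < r)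
        exact le_trans this.le (min_le_left _ _)
      apply hbound n (Bjk n) (Bjk n * s) ((hBjknorm n).trans (hcoefjk2 n))
      have hre1 : (Bjk n * s).re ≤ ‖Bjk n * s‖ := Complex.re_le_norm _
      have hb : ‖Bjk n * s‖ ≤ 2 * Real.pi * N n ^ 2 * (c₀ / 4) := by
        rw [norm_mul]
        exact mul_le_mul (hBjknorm n) hsn (norm_nonneg _) (by positivity)
      have heq : 2 * Real.pi * N n ^ 2 * (c₀ / 4) = Real.pi * c₀ / 2 * N n ^ 2 := by ring
      have hnn2 : 0 ≤ 4 * Real.pi * N n := by positivity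
      linarith [hre1, hb, hnn2]
    refine hasDerivAt_tsum_of_isPreconnected hUsum Metric.isOpen_ball
      (convex_ball (0:ℂ) r).isPreconnected
      (fun n s _ => hasDerivAt_exp_affine (cA τ z n) (Bjk n) s)
      hbnd (Metric.mem_ball_self hr0) ?_ (Metric.mem_ball_self hr0)
    · apply Summable.of_norm_bounded hUsum
      intro n
      have := hbound n 1 (Bjk n * 0) (by rw [norm_one]; exact hcoef1 n) ?_
      · simpa using this
      · simp only [mul_zero, Complex.zero_re]
        positivity
  -- ================= assembly =================
  have hev : (fun s : ℂ => deriv (fun t : ℂ =>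
      riemannTheta g τ (z + s • (Pi.single j 1 : Fin g → ℂ) + t • (Pi.single k 1 : Fin g → ℂ))) 0)
      =ᶠ[nhds (0:ℂ)] G := by
    filter_upwards [Metric.ball_mem_nhds (0:ℂ) one_pos] with s hs
    rw [(H1 s hs).deriv, hG]
    exact tsum_congr fun n => by rw [mul_zero, add_zero]
  rw [hev.deriv_eq, H2.deriv, H3.deriv]
  rw [← tsum_mul_left]
  exact tsum_congr fun n => by rw [hBj, hBk, hBjk]; ring
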